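/- The stabilizer in PGU(3,q) of the flag (∞, L), where L is the line x = 0 of the Hermitian unital, acts transitively on the q points of L other than ∞; moreover this stabilizer consists exactly of the maps x' = x, y' = (a^{q+1} y + cz)/a, z' = z/a with a ∈ F_{q^2}^*, c ∈ F_{q^2}, c^q + c = 0. -/

import Mathlib

open Matrix

/-- The Hermitian form `β(u,v) = -x₁x₂^q + y₁z₂^q + z₁y₂^q` on `F_{q²}³`. -/
def herm {K : Type*} [Field K] (q : ℕ) (u v : Fin 3 → K) : K :=
  -(u 0 * v 0 ^ q) + u 1 * v 2 ^ q + u 2 * v 1 ^ q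

/-- The Gram matrix of the Hermitian form. -/
def DMat (K : Type*) [Field K] : Matrix (Fin 3) (Fin 3) K :=
  !![-1, 0, 0; 0, 0, 1; 0, 1, 0]

/-- Membership in `GU(3,q)`. -/
def InGU {K : Type*} [Field K] (q : ℕ) (A : Matrix (Fin 3) (Fin 3) K) : Prop :=
  IsUnit A.det ∧ Aᵀ * DMat K * A.map (fun x => x ^ q) = DMat K

open Polynomial in
lemma charp_of_card (p e q : ℕ) (hp : p.Prime) (hq : q = p ^ e)
    (K : Type) [Field K] [Fintype K] (hcard : Fintype.card K = q ^ 2) : CharP K p := by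
  set r := ringChar K with hr
  haveI : CharP K r := ringChar.charP K
  have hrne : r ≠ 0 := CharP.char_ne_zero_of_finite K r
  have hrp : r.Prime := CharP.char_prime_of_ne_zero K hrne
  obtain ⟨n, -, hKn⟩ := FiniteField.card K r
  have hdvd : r ∣ p ^ (e * 2) := by
    have h1 : r ∣ Fintype.card K := hKn ▸ dvd_pow_self r n.2.ne'
    rwa [hcard, hq, ← pow_mul] at h1
  have : r = p := (Nat.prime_dvd_prime_iff_eq hrp hp).mp (hrp.dvd_of_dvd_pow hdvd)
  rw [← this]; infer_instance

open Polynomial in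
lemma card_trace_zero (p e q : ℕ) (hp : p.Prime) (he : 0 < e) (hq : q = p ^ e) (hq2 : 2 < q)
    (K : Type) [Field K] [Fintype K] (hcard : Fintype.card K = q ^ 2) :
    Nat.card {c : K // c ^ q + c = 0} = q := by
  classical
  haveI : CharP K p := charp_of_card p e q hp hq K hcard
  haveI := Fact.mk hp
  have hfdeg : ((X:K[X]) ^ q + X).natDegree = q := by
    compute_degree!
    · rw [if_neg (by omega : ¬ (1:ℕ) = q)]; norm_num
    · omega
  have hfne : ((X:K[X]) ^ q + X) ≠ 0 := by
    intro h; rw [h, natDegree_zero] at hfdeg; omega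
  have hpq : (q : K) = 0 := by
    have : (p : K) = 0 := CharP.cast_eq_zero K p
    rw [hq]; push_cast; rw [this, zero_pow he.ne']
  have hfq : ((X:K[X]) ^ q + X) ^ q = X ^ (q * q) + X ^ q := by
    calc ((X:K[X]) ^ q + X) ^ q = ((X:K[X]) ^ q + X) ^ (p ^ e) := by rw [hq]
    _ = ((X:K[X]) ^ q) ^ (p ^ e) + X ^ (p ^ e) := add_pow_char_pow ..
    _ = X ^ (q * q) + X ^ q := by rw [← hq, ← pow_mul]
  have hdvd : ((X:K[X]) ^ q + X) ∣ (X ^ Fintype.card K - X : K[X]) := by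
    refine ⟨((X:K[X]) ^ q + X) ^ (q - 1) - 1, ?_⟩
    rw [hcard, pow_two, mul_sub, mul_one, ← pow_succ', Nat.sub_add_cancel (by omega), hfq]
    ring
  have hcardK : 1 < Fintype.card K := by rw [hcard]; nlinarith
  have hgdeg : ((X:K[X]) ^ Fintype.card K - X).natDegree = Fintype.card K := by
    compute_degree!
    · rw [if_neg (by omega : ¬ (1:ℕ) = Fintype.card K)]; norm_num
    · omega
  have hgne : ((X:K[X]) ^ Fintype.card K - X) ≠ 0 := by
    intro h; rw [h, natDegree_zero] at hgdeg; omega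
  have hgsplits : ((X:K[X]) ^ Fintype.card K - X).Splits := by
    rw [splits_iff_card_roots, hgdeg, FiniteField.roots_X_pow_card_sub_X K]
    simp [Finset.card_univ]
  have hfsplits : ((X:K[X]) ^ q + X).Splits :=
    hgsplits.of_dvd hgne hdvd
  have hcards : Multiset.card ((X:K[X]) ^ q + X).roots = q := by
    rw [splits_iff_card_roots.mp hfsplits, hfdeg]
  have hsep : ((X:K[X]) ^ q + X).Separable := by
    have hd : ((X:K[X]) ^ q + X).derivative = 1 := by
      rw [derivative_add, derivative_X_pow, derivative_X]
      simp [hpq]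
    unfold Polynomial.Separable
    rw [hd]
    exact isCoprime_one_right
  have hnodup := Polynomial.nodup_roots hsep
  have hset : (Finset.univ.filter fun c : K => c ^ q + c = 0) =
      ((X:K[X]) ^ q + X).roots.toFinset := by
    ext c
    simp [Polynomial.mem_roots, hfne, Polynomial.IsRoot]
  rw [Nat.card_eq_fintype_card, Fintype.card_subtype, hset,
    Multiset.toFinset_card_of_nodup hnodup, hcards]

lemma card_points (q : ℕ) (K : Type) [Field K] [Fintype K]
    (hcardq : Nat.card {c : K // c ^ q + c = 0} = q) :
    Nat.card {W : Submodule K (Fin 3 → K) //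
        (∃ w : Fin 3 → K, w ≠ 0 ∧ w 0 = 0 ∧ herm q w w = 0 ∧ W = Submodule.span K {w})
        ∧ W ≠ Submodule.span K {(![0, 1, 0] : Fin 3 → K)}} = q := by
  have hmem : ∀ c : K, c ^ q + c = 0 →
      ((∃ w : Fin 3 → K, w ≠ 0 ∧ w 0 = 0 ∧ herm q w w = 0 ∧
          Submodule.span K {![0, c, 1]} = Submodule.span K {w})
       ∧ Submodule.span K {![0, c, 1]} ≠ Submodule.span K {(![0, 1, 0] : Fin 3 → K)}) := by
    intro c hc
    constructor
    · refine ⟨![0, c, 1], ?_, by simp, ?_, rfl⟩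
      · intro h
        have := congr_fun h 2
        simp at this
      · simp [herm]
        linear_combination hc
    · intro h
      have h2 : (![0, c, 1] : Fin 3 → K) ∈ Submodule.span K {(![0, 1, 0] : Fin 3 → K)} := by
        rw [← h]; exact Submodule.mem_span_singleton_self _
      rw [Submodule.mem_span_singleton] at h2
      obtain ⟨t, ht⟩ := h2
      have := congr_fun ht 2
      simp at this
  set g : {c : K // c ^ q + c = 0} → {W : Submodule K (Fin 3 → K) //
        (∃ w : Fin 3 → K, w ≠ 0 ∧ w 0 = 0 ∧ herm q w w = 0 ∧ W = Submodule.span K {w})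
        ∧ W ≠ Submodule.span K {(![0, 1, 0] : Fin 3 → K)}} :=
    fun c => ⟨Submodule.span K {![0, c.1, 1]}, hmem c.1 c.2⟩ with hgdef
  have hginj : Function.Injective g := by
    rintro ⟨c, hc⟩ ⟨c', hc'⟩ h
    simp only [hgdef, Subtype.mk.injEq] at h ⊢
    have h2 : (![0, c, 1] : Fin 3 → K) ∈ Submodule.span K {(![0, c', 1] : Fin 3 → K)} := by
      rw [← h]; exact Submodule.mem_span_singleton_self _
    rw [Submodule.mem_span_singleton] at h2
    obtain ⟨t, ht⟩ := h2
    have h3 := congr_fun ht 2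
    have h4 := congr_fun ht 1
    simp at h3 h4
    rw [h3, one_mul] at h4
    exact h4.symm
  have hgsurj : Function.Surjective g := by
    rintro ⟨W, ⟨w, hw0, hw00, hherm, rfl⟩, hWne⟩
    have hz : w 2 ≠ 0 := by
      intro hz
      apply hWne
      have hw1 : w 1 ≠ 0 := by
        intro h1
        apply hw0
        funext i; fin_cases i
        · exact hw00
        · exact h1
        · exact hz
      have hweq : w = w 1 • ![0, 1, 0] := by
        funext i; fin_cases i
        · simpa using hw00
        · simp
        · simpa using hz
      rw [hweq, Submodule.span_singleton_smul_eq (IsUnit.mk0 _ hw1)]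
    have hherm' : w 1 * w 2 ^ q + w 2 * w 1 ^ q = 0 := by
      have h5 : herm q w w = 0 := hherm
      simpa [herm, hw00] using h5
    have hc : (w 1 / w 2) ^ q + (w 1 / w 2) = 0 := by
      rw [div_pow, div_add_div _ _ (pow_ne_zero _ hz) hz, div_eq_zero_iff]; left
      linear_combination hherm'
    refine ⟨⟨w 1 / w 2, hc⟩, ?_⟩
    have hweq : w = w 2 • ![0, w 1 / w 2, 1] := by
      funext i; fin_cases i
      · simpa using hw00
      · simp; field_simp
      · simp
    simp only [hgdef, Subtype.mk.injEq]
    conv_rhs => rw [hweq]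
    exact (Submodule.span_singleton_smul_eq (IsUnit.mk0 _ hz) _).symm
  exact (Nat.card_congr (Equiv.ofBijective g ⟨hginj, hgsurj⟩).symm).trans hcardq

lemma stab_char (q : ℕ) (hq0 : q ≠ 0) (K : Type) [Field K] (A : Matrix (Fin 3) (Fin 3) K)
    (hA : InGU q A) :
    (((∃ c : K, A.mulVec ![0, 1, 0] = c • ![0, 1, 0]) ∧
        (∀ v : Fin 3 → K, v 0 = 0 → A.mulVec v 0 = 0))
       ↔ ∃ a c z : K, a ≠ 0 ∧ c ^ q + c = 0 ∧ z ^ (q + 1) = 1 ∧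
           A = z • !![1, 0, 0; 0, a ^ q, c / a; 0, 0, a⁻¹]) := by
  constructor
  · rintro ⟨⟨t, ht⟩, hplane⟩
    have h01 : A 0 1 = 0 := by
      have := hplane ![0, 1, 0] (by simp)
      simpa [Matrix.mulVec, dotProduct, Fin.sum_univ_three] using this
    have h02 : A 0 2 = 0 := by
      have := hplane ![0, 0, 1] (by simp)
      simpa [Matrix.mulVec, dotProduct, Fin.sum_univ_three] using this
    have h21 : A 2 1 = 0 := by
      have := congr_fun ht 2
      simpa [Matrix.mulVec, dotProduct, Fin.sum_univ_three] using this
    have hU := hA.2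
    have E12 : A 1 1 * (A 2 2) ^ q = 1 := by
      have := congr_fun (congr_fun hU 1) 2
      simpa [Matrix.mul_apply, Fin.sum_univ_three, DMat, Matrix.map_apply, h01, h02, h21]
        using this
    have hA11 : A 1 1 ≠ 0 := left_ne_zero_of_mul_eq_one E12
    have hA22 : A 2 2 ≠ 0 := by
      intro h
      rw [h, zero_pow hq0, mul_zero] at E12
      exact zero_ne_one E12
    have E01 : A 2 0 * (A 1 1) ^ q = 0 := by
      have := congr_fun (congr_fun hU 0) 1
      simpa [Matrix.mul_apply, Fin.sum_univ_three, DMat, Matrix.map_apply, h01, h02, h21,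
        zero_pow hq0] using this
    have h20 : A 2 0 = 0 := by
      rcases mul_eq_zero.mp E01 with h|h
      · exact h
      · exact absurd ((pow_eq_zero_iff hq0).mp h) hA11
    have E02 : A 1 0 * (A 2 2) ^ q = 0 := by
      have := congr_fun (congr_fun hU 0) 2
      simpa [Matrix.mul_apply, Fin.sum_univ_three, DMat, Matrix.map_apply, h01, h02, h21, h20,
        zero_pow hq0] using this
    have h10 : A 1 0 = 0 := by
      rcases mul_eq_zero.mp E02 with h|h
      · exact h
      · exact absurd ((pow_eq_zero_iff hq0).mp h) hA22
    have E00 : A 0 0 * (A 0 0) ^ q = 1 := by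
      have := congr_fun (congr_fun hU 0) 0
      simpa [Matrix.mul_apply, Fin.sum_univ_three, DMat, Matrix.map_apply, h01, h02, h21, h20,
        h10, zero_pow hq0] using this
    have E22 : A 2 2 * (A 1 2) ^ q + A 1 2 * (A 2 2) ^ q = 0 := by
      have := congr_fun (congr_fun hU 2) 2
      simpa [Matrix.mul_apply, Fin.sum_univ_three, DMat, Matrix.map_apply, h01, h02, h21, h20,
        h10, zero_pow hq0] using this
    have hA00 : A 0 0 ≠ 0 := left_ne_zero_of_mul_eq_one E00
    refine ⟨A 0 0 * (A 2 2)⁻¹, A 1 2 * (A 2 2)⁻¹, A 0 0, ?_, ?_, ?_, ?_⟩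
    · exact mul_ne_zero hA00 (inv_ne_zero hA22)
    · rw [mul_pow, inv_pow]
      have expand : (A 1 2) ^ q * ((A 2 2) ^ q)⁻¹ + A 1 2 * (A 2 2)⁻¹ =
          (A 2 2 * (A 1 2) ^ q + A 1 2 * (A 2 2) ^ q) * (((A 2 2) ^ q)⁻¹ * (A 2 2)⁻¹) := by
        field_simp
      rw [expand, E22, zero_mul]
    · rw [pow_succ]
      linear_combination E00
    · ext i j
      fin_cases i <;> fin_cases j <;>
        simp [Matrix.smul_apply, h01, h02, h21, h20, h10, Matrix.vecHead, Matrix.vecTail]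
      · rw [mul_pow, inv_pow]
        field_simp
        linear_combination E12 - E00
      · field_simp
      · field_simp
  · rintro ⟨a, c, z, ha, hc, hz, rfl⟩
    constructor
    · refine ⟨z * a ^ q, ?_⟩
      funext i; fin_cases i <;>
        simp [Matrix.mulVec, dotProduct, Fin.sum_univ_three]
    · intro v hv
      simp [Matrix.mulVec, dotProduct, Fin.sum_univ_three, hv]

lemma vec2_ne (K : Type) [Field K] (w : Fin 3 → K) (hw0 : w ≠ 0) (hw00 : w 0 = 0)
    (hWne : Submodule.span K {w} ≠ Submodule.span K {(![0, 1, 0] : Fin 3 → K)}) :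
    w 2 ≠ 0 := by
  intro hz
  apply hWne
  have hw1 : w 1 ≠ 0 := by
    intro h1
    apply hw0
    funext i; fin_cases i
    · exact hw00
    · exact h1
    · exact hz
  have hweq : w = w 1 • ![0, 1, 0] := by
    funext i; fin_cases i
    · simpa using hw00
    · simp
    · simpa using hz
  rw [hweq, Submodule.span_singleton_smul_eq (IsUnit.mk0 _ hw1)]

lemma trace_zero_of (q : ℕ) (K : Type) [Field K] (w : Fin 3 → K) (hw00 : w 0 = 0)
    (hherm : herm q w w = 0) (hz : w 2 ≠ 0) : (w 1 / w 2) ^ q + w 1 / w 2 = 0 := by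
  have hherm' : w 1 * w 2 ^ q + w 2 * w 1 ^ q = 0 := by
    simpa [herm, hw00] using hherm
  rw [div_pow, div_add_div _ _ (pow_ne_zero _ hz) hz, div_eq_zero_iff]; left
  linear_combination hherm'

lemma trans_part (p e q : ℕ) (hp : p.Prime) (he : 0 < e) (hq : q = p ^ e) (hq2 : 2 < q)
    (K : Type) [Field K] [Fintype K] (hcard : Fintype.card K = q ^ 2)
    (hchar : CharP K p)
    (u w : Fin 3 → K) (hu0 : u ≠ 0) (hw0 : w ≠ 0) (hu00 : u 0 = 0) (hw00 : w 0 = 0)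
    (huh : herm q u u = 0) (hwh : herm q w w = 0)
    (hune : Submodule.span K {u} ≠ Submodule.span K {(![0, 1, 0] : Fin 3 → K)})
    (hwne : Submodule.span K {w} ≠ Submodule.span K {(![0, 1, 0] : Fin 3 → K)}) :
    ∃ A : Matrix (Fin 3) (Fin 3) K, InGU q A ∧
      (∃ c : K, A.mulVec ![0, 1, 0] = c • ![0, 1, 0]) ∧
      (∀ v : Fin 3 → K, v 0 = 0 → A.mulVec v 0 = 0) ∧
      ∃ c : K, A.mulVec u = c • w := by
  haveI := Fact.mk hp
  have hq0 : q ≠ 0 := by omega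
  have hu2 := vec2_ne K u hu0 hu00 hune
  have hw2 := vec2_ne K w hw0 hw00 hwne
  have hc1 := trace_zero_of q K u hu00 huh hu2
  have hc2 := trace_zero_of q K w hw00 hwh hw2
  set c : K := w 1 / w 2 - u 1 / u 2 with hcdef
  have hcc : c ^ q + c = 0 := by
    have hsub : (w 1 / w 2 - u 1 / u 2) ^ q = (w 1 / w 2) ^ q - (u 1 / u 2) ^ q := by
      rw [hq]; exact sub_pow_char_pow ..
    rw [hcdef, hsub]
    linear_combination hc2 - hc1
  refine ⟨!![1, 0, 0; 0, 1, c; 0, 0, 1], ⟨?_, ?_⟩, ⟨1, ?_⟩, ?_, ⟨u 2 / w 2, ?_⟩⟩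
  · simp [Matrix.det_fin_three]
  · ext i j
    fin_cases i <;> fin_cases j <;>
      simp [DMat, Matrix.mul_apply, Fin.sum_univ_three, Matrix.map_apply, zero_pow hq0,
        Matrix.vecHead, Matrix.vecTail]
    linear_combination hcc
  · funext i; fin_cases i <;>
      simp [Matrix.mulVec, dotProduct, Fin.sum_univ_three]
  · intro v hv
    simp [Matrix.mulVec, dotProduct, Fin.sum_univ_three, hv]
  · funext i; fin_cases i
    · simp [Matrix.mulVec, dotProduct, Fin.sum_univ_three, hu00, hw00]
    · simp [Matrix.mulVec, dotProduct, Fin.sum_univ_three, hu00, hcdef]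
      field_simp
      ring
    · simp [Matrix.mulVec, dotProduct, Fin.sum_univ_three, hu00]
      field_simp

/-- The stabilizer in `PGU(3,q)` of the flag `(∞, L)`, where `L : x = 0`, consists
exactly of the maps `x' = x, y' = (a^{q+1} y + cz)/a, z' = z/a` with `c^q + c = 0`,
and it acts transitively on the `q` points of `L` other than `∞`. -/
theorem flag_stabilizer_transitive_on_line
    (p e q : ℕ) (hp : p.Prime) (he : 0 < e) (hq : q = p ^ e) (hq2 : 2 < q)
    (K : Type) [Field K] [Fintype K]
    (hcard : Fintype.card K = q ^ 2) :
    -- the stabilizer of the flag (∞, L) is as described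
    (∀ A : Matrix (Fin 3) (Fin 3) K, InGU q A →
      (((∃ c : K, A.mulVec ![0, 1, 0] = c • ![0, 1, 0]) ∧
        (∀ v : Fin 3 → K, v 0 = 0 → A.mulVec v 0 = 0))
       ↔ ∃ a c z : K, a ≠ 0 ∧ c ^ q + c = 0 ∧ z ^ (q + 1) = 1 ∧
           A = z • !![1, 0, 0; 0, a ^ q, c / a; 0, 0, a⁻¹]))
    -- L has exactly q points other than ∞
    ∧ Nat.card {W : Submodule K (Fin 3 → K) //
        (∃ w : Fin 3 → K, w ≠ 0 ∧ w 0 = 0 ∧ herm q w w = 0 ∧ W = Submodule.span K {w})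
        ∧ W ≠ Submodule.span K {(![0, 1, 0] : Fin 3 → K)}} = q
    -- transitivity on the points of L other than ∞
    ∧ (∀ u w : Fin 3 → K, u ≠ 0 → w ≠ 0 → u 0 = 0 → w 0 = 0 →
        herm q u u = 0 → herm q w w = 0 →
        Submodule.span K {u} ≠ Submodule.span K {(![0, 1, 0] : Fin 3 → K)} →
        Submodule.span K {w} ≠ Submodule.span K {(![0, 1, 0] : Fin 3 → K)} →
        ∃ A : Matrix (Fin 3) (Fin 3) K, InGU q A ∧
          (∃ c : K, A.mulVec ![0, 1, 0] = c • ![0, 1, 0]) ∧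
          (∀ v : Fin 3 → K, v 0 = 0 → A.mulVec v 0 = 0) ∧
          ∃ c : K, A.mulVec u = c • w) := by
  haveI hchar : CharP K p := charp_of_card p e q hp hq K hcard
  refine ⟨fun A hA => stab_char q (by omega) K A hA,
    card_points q K (card_trace_zero p e q hp he hq hq2 K hcard),
    fun u w hu0 hw0 hu00 hw00 huh hwh hune hwne =>
      trans_part p e q hp he hq hq2 K hcard hchar u w hu0 hw0 hu00 hw00 huh hwh hune hwne⟩
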